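/- Full faithfulness from the simple case (Appendix A Lemma): Let 𝒞 be a Serre subcategory of an abelian category 𝒜 with enough projectives, all of whose objects have finite length, and let F : 𝒞 → ℬ be an exact additive functor into an abelian category ℬ with enough projectives. Assume: (i) for all simple objects X, Y of 𝒞 the map Hom_𝒜(X, Y) → Hom_ℬ(F X, F Y) is bijective and the map Ext¹_𝒜(X, Y) → Ext¹_ℬ(F X, F Y) is injective; (ii) F sends simple objects to simple objects; (iii) for simple X, Y of 𝒞, F X ≅ F Y implies X ≅ Y. Then for all objects X, Y of 𝒞, the map Hom_𝒜(X, Y) → Hom_ℬ(F X, F Y) is bijective (F is fully faithful) and the map Ext¹_𝒜(X, Y) → Ext¹_ℬ(F X, F Y) is injective. -/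

import Mathlib

open CategoryTheory Limits

/-- `LengthLE n X`: the object `X` has length at most `n` (a composition series with at
most `n` simple subquotients). -/
def LengthLE {A : Type*} [Category A] [Abelian A] : ℕ → A → Prop
  | 0 => fun X => IsZero X
  | (n + 1) => fun X => IsZero X ∨
      ∃ (Y : A) (i : Y ⟶ X), Mono i ∧ Simple (cokernel i) ∧ LengthLE n Y

/-- An object has finite length if it has a finite composition series. -/
def FiniteLength {A : Type*} [Category A] [Abelian A] (X : A) : Prop :=
  ∃ n : ℕ, LengthLE n X


section Helpers

variable {C : Type*} [Category C] [Abelian C]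

lemma ses_coker {X Y : C} (f : X ⟶ Y) [Mono f] :
    (ShortComplex.mk f (cokernel.π f) (cokernel.condition f)).ShortExact :=
  ShortComplex.ShortExact.mk'
    (ShortComplex.exact_of_g_is_cokernel _ (cokernelIsCokernel f)) ‹_› inferInstance

lemma ses_ker {X Y : C} (f : X ⟶ Y) [Epi f] :
    (ShortComplex.mk (kernel.ι f) f (kernel.condition f)).ShortExact :=
  ShortComplex.ShortExact.mk'
    (ShortComplex.exact_of_f_is_kernel _ (kernelIsKernel f)) inferInstance ‹_›

lemma lift_of_comp_zero {S : ShortComplex C} (hS : S.ShortExact) {T : C} (u : T ⟶ S.X₂)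
    (h : u ≫ S.g = 0) : ∃ v : T ⟶ S.X₁, v ≫ S.f = u := by
  obtain ⟨v, hv⟩ := KernelFork.IsLimit.lift' hS.fIsKernel u h
  exact ⟨v, hv⟩

lemma desc_of_comp_zero {S : ShortComplex C} (hS : S.ShortExact) {T : C} (u : S.X₂ ⟶ T)
    (h : S.f ≫ u = 0) : ∃ v : S.X₃ ⟶ T, S.g ≫ v = u := by
  obtain ⟨v, hv⟩ := CokernelCofork.IsColimit.desc' hS.gIsCokernel u h
  exact ⟨v, hv⟩

lemma sec_of_retr {S : ShortComplex C} (hS : S.ShortExact) {r : S.X₂ ⟶ S.X₁}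
    (hr : S.f ≫ r = 𝟙 _) : ∃ s : S.X₃ ⟶ S.X₂, s ≫ S.g = 𝟙 _ :=
  ⟨(ShortComplex.Splitting.ofExactOfRetraction S hS.exact r hr hS.epi_g).s,
   (ShortComplex.Splitting.ofExactOfRetraction S hS.exact r hr hS.epi_g).s_g⟩

lemma retr_of_sec {S : ShortComplex C} (hS : S.ShortExact) {s : S.X₃ ⟶ S.X₂}
    (hs : s ≫ S.g = 𝟙 _) : ∃ r : S.X₂ ⟶ S.X₁, S.f ≫ r = 𝟙 _ :=
  ⟨(ShortComplex.Splitting.ofExactOfSection S hS.exact s hs hS.mono_f).r,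
   (ShortComplex.Splitting.ofExactOfSection S hS.exact s hs hS.mono_f).f_r⟩

lemma ses_biprod (X Y : C) :
    (ShortComplex.mk (biprod.inl : X ⟶ X ⊞ Y) (biprod.snd : X ⊞ Y ⟶ Y) (by simp)).ShortExact := by
  have s := ShortComplex.Splitting.ofHasBinaryBiproduct (C := C) X Y
  exact ShortComplex.ShortExact.mk' s.exact s.mono_f s.epi_g

/-- The induced map `coker f → coker (f ≫ g)` is mono when `g` is mono. -/
lemma mono_cokernel_map {X Y E : C} (f : X ⟶ Y) (g : Y ⟶ E) [Mono g] :
    Mono (cokernel.map f (f ≫ g) (𝟙 X) g (by simp)) := by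
  apply Preadditive.mono_of_cancel_zero
  intro T h hh
  obtain ⟨T', π, hπ, y, hy⟩ := surjective_up_to_refinements_of_epi (cokernel.π f) h
  have h1 : (y ≫ g) ≫ cokernel.π (f ≫ g) = 0 := by
    have := hy =≫ cokernel.map f (f ≫ g) (𝟙 X) g (by simp)
    simp only [Category.assoc, hh, comp_zero] at this
    simpa [cokernel.π_desc, cokernel.map] using this.symm
  obtain ⟨T'', π₂, hπ₂, x, hx⟩ :=
    (ShortComplex.exact_of_g_is_cokernel (ShortComplex.mk (f ≫ g) (cokernel.π (f ≫ g))
      (cokernel.condition _)) (cokernelIsCokernel _)).exact_up_to_refinements (y ≫ g) h1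
  dsimp at hx
  have h2 : π₂ ≫ y = x ≫ f := by
    rw [← cancel_mono g]
    simpa [Category.assoc] using hx
  haveI : Epi (π₂ ≫ π) := epi_comp _ _
  apply zero_of_epi_comp (π₂ ≫ π)
  rw [Category.assoc, hy, ← Category.assoc, h2, Category.assoc, cokernel.condition,
    comp_zero]

/-- Third isomorphism: `coker (coker f → coker (f≫g)) ≅ coker g`. -/
noncomputable def thirdIso {X Y E : C} (f : X ⟶ Y) (g : Y ⟶ E) :
    cokernel (cokernel.map f (f ≫ g) (𝟙 X) g (by simp)) ≅ cokernel g where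
  hom := cokernel.desc _ (cokernel.desc (f ≫ g) (cokernel.π g)
      (by rw [Category.assoc, cokernel.condition, comp_zero]))
    (by
      rw [← cancel_epi (cokernel.π f)]
      simp [cokernel.map])
  inv := cokernel.desc g (cokernel.π (f ≫ g) ≫ cokernel.π _)
    (by
      have h : g ≫ cokernel.π (f ≫ g) = cokernel.π f ≫ cokernel.map f (f ≫ g) (𝟙 X) g (by simp) := by
        simp [cokernel.map]
      rw [reassoc_of% h, cokernel.condition, comp_zero])
  hom_inv_id := by
    rw [← cancel_epi (cokernel.π _), ← cancel_epi (cokernel.π (f ≫ g))]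
    simp
  inv_hom_id := by
    rw [← cancel_epi (cokernel.π g)]
    simp

lemma exists_simple_sub :
    ∀ (n : ℕ) (Y : C), LengthLE n Y → ¬ IsZero Y →
      ∃ (Y₀ : C) (j : Y₀ ⟶ Y), Mono j ∧ Simple Y₀ ∧
        ∃ m, m + 1 ≤ n ∧ LengthLE m (cokernel j) := by
  intro n
  induction n with
  | zero => intro Y h hz; exact absurd h hz
  | succ n ih =>
    intro Y h hz
    rcases h with h | ⟨Y', i, hmono, hsimple, hY'⟩
    · exact absurd h hz
    by_cases hz' : IsZero Y'
    · have hi : i = 0 := hz'.eq_zero_of_src i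
      haveI := hsimple
      have e : cokernel i ≅ Y := (cokernelIsoOfEq hi).trans cokernelZeroIsoTarget
      have hYs : Simple Y := Simple.of_iso e.symm
      refine ⟨Y, 𝟙 Y, inferInstance, hYs, 0, Nat.succ_le_succ (Nat.zero_le n), ?_⟩
      show IsZero (cokernel (𝟙 Y))
      rw [IsZero.iff_id_eq_zero, ← cancel_epi (cokernel.π (𝟙 Y)), comp_zero, Category.comp_id,
        cokernel.π_of_epi]
    · obtain ⟨Y₀, j', hj'm, hY₀s, m, hm, hcoker⟩ := ih Y' hY' hz'
      haveI := hj'm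
      haveI := hsimple
      refine ⟨Y₀, j' ≫ i, mono_comp _ _, hY₀s, m + 1, Nat.succ_le_succ hm, ?_⟩
      exact Or.inr ⟨cokernel j', cokernel.map j' (j' ≫ i) (𝟙 Y₀) i (by simp),
        mono_cokernel_map j' i, Simple.of_iso (thirdIso j' i), hcoker⟩

end Helpers

section Chases

variable {C : Type*} [Category C] [Abelian C]

lemma exact_coker {X Y : C} (f : X ⟶ Y) :
    (ShortComplex.mk f (cokernel.π f) (cokernel.condition f)).Exact :=
  ShortComplex.exact_of_g_is_cokernel _ (cokernelIsCokernel f)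

lemma biprod_desc_eq {X Y T : C} (f : X ⟶ T) (g : Y ⟶ T) :
    biprod.desc f g = biprod.fst ≫ f + biprod.snd ≫ g := by
  apply biprod.hom_ext' <;> simp

lemma biprod_lift_eq {X Y T : C} (f : T ⟶ X) (g : T ⟶ Y) :
    biprod.lift f g = f ≫ biprod.inl + g ≫ biprod.inr := by
  apply biprod.hom_ext <;> simp

/-- Pushing out a short exact sequence `0 → Y → E → X → 0` along `Y → coker j`. -/
lemma ses_quot {Y₀ Y E X : C} (j : Y₀ ⟶ Y) (i : Y ⟶ E) [Mono i] (p : E ⟶ X) (w : i ≫ p = 0)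
    (hS : (ShortComplex.mk i p w).ShortExact) :
    (ShortComplex.mk (cokernel.map j (j ≫ i) (𝟙 Y₀) i (by simp))
      (cokernel.desc (j ≫ i) p (by rw [Category.assoc, w, comp_zero]))
      (by rw [← cancel_epi (cokernel.π j)]; simp [cokernel.map, w])).ShortExact := by
  have hepi : Epi (cokernel.desc (j ≫ i) p (by rw [Category.assoc, w, comp_zero])) := by
    have : Epi p := hS.epi_g
    exact epi_of_epi_fac (cokernel.π_desc (j ≫ i) p _)
  have hmono := mono_cokernel_map j i
  refine ShortComplex.ShortExact.mk' ?_ hmono hepi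
  rw [ShortComplex.exact_iff_exact_up_to_refinements]
  intro T x hx
  dsimp at x hx ⊢
  obtain ⟨T', π, hπ, e, he⟩ := surjective_up_to_refinements_of_epi (cokernel.π (j ≫ i)) x
  have hep : e ≫ p = 0 := by
    have h3 := he =≫ cokernel.desc (j ≫ i) p (by rw [Category.assoc, w, comp_zero])
    simp only [Category.assoc, cokernel.π_desc, hx, comp_zero] at h3
    exact h3.symm
  obtain ⟨T'', π₂, hπ₂, y, hy⟩ := hS.exact.exact_up_to_refinements e hep
  refine ⟨T'', π₂ ≫ π, epi_comp _ _, y ≫ cokernel.π j, ?_⟩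
  calc (π₂ ≫ π) ≫ x = π₂ ≫ e ≫ cokernel.π (j ≫ i) := by rw [Category.assoc, he]
    _ = (y ≫ i) ≫ cokernel.π (j ≫ i) := by rw [← Category.assoc]; exact hy =≫ _
    _ = (y ≫ cokernel.π j) ≫ cokernel.map j (j ≫ i) (𝟙 Y₀) i (by simp) := by
        simp [cokernel.map]

/-- The kernel of a compatible map `ψ : E ⟶ coker j` gives a short exact
sequence `0 → Y₀ → ker ψ → X → 0`. -/
lemma ses_sub {Y₀ Y E X : C} (j : Y₀ ⟶ Y) [Mono j] (i : Y ⟶ E) [Mono i] (p : E ⟶ X)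
    (w : i ≫ p = 0) (hS : (ShortComplex.mk i p w).ShortExact)
    (ψ : E ⟶ cokernel j) (hψ : i ≫ ψ = cokernel.π j) :
    (ShortComplex.mk
      (kernel.lift ψ (j ≫ i) (by rw [Category.assoc, hψ, cokernel.condition]))
      (kernel.ι ψ ≫ p)
      (by rw [← Category.assoc, kernel.lift_ι, Category.assoc, w, comp_zero])).ShortExact := by
  have hmono : Mono (kernel.lift ψ (j ≫ i)
      (by rw [Category.assoc, hψ, cokernel.condition])) := by
    have : Mono (j ≫ i) := mono_comp _ _
    exact mono_of_mono_fac (kernel.lift_ι ψ (j ≫ i) _)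
  have hepi : Epi (kernel.ι ψ ≫ p) := by
    rw [epi_iff_surjective_up_to_refinements]
    intro T s
    have : Epi p := hS.epi_g
    obtain ⟨T', π₁, hπ₁, e, he⟩ := surjective_up_to_refinements_of_epi p s
    obtain ⟨T'', π₂, hπ₂, y, hy⟩ := surjective_up_to_refinements_of_epi (cokernel.π j) (e ≫ ψ)
    have hsub : (π₂ ≫ e - y ≫ i) ≫ ψ = 0 := by
      rw [Preadditive.sub_comp, Category.assoc, Category.assoc, hψ, ← hy, sub_self]
    refine ⟨T'', π₂ ≫ π₁, epi_comp _ _, kernel.lift ψ (π₂ ≫ e - y ≫ i) hsub, ?_⟩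
    rw [← Category.assoc, kernel.lift_ι]
    simp only [Preadditive.sub_comp, Category.assoc, w, comp_zero, sub_zero]
    rw [he]
  refine ShortComplex.ShortExact.mk' ?_ hmono hepi
  rw [ShortComplex.exact_iff_exact_up_to_refinements]
  intro T x hx
  dsimp at x hx ⊢
  obtain ⟨T', π₁, hπ₁, y, hy⟩ := hS.exact.exact_up_to_refinements (x ≫ kernel.ι ψ)
      (by rw [Category.assoc]; rw [← Category.assoc] at hx ⊢; exact hx)
  have h1 : y ≫ cokernel.π j = 0 := by
    rw [← hψ, ← Category.assoc, ← hy, Category.assoc, Category.assoc, kernel.condition,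
      comp_zero, comp_zero]
  obtain ⟨T'', π₂, hπ₂, y₀, hy₀⟩ := (exact_coker j).exact_up_to_refinements y h1
  refine ⟨T'', π₂ ≫ π₁, epi_comp _ _, y₀, ?_⟩
  rw [← cancel_mono (kernel.ι ψ)]
  calc ((π₂ ≫ π₁) ≫ x) ≫ kernel.ι ψ = π₂ ≫ π₁ ≫ x ≫ kernel.ι ψ := by
        rw [Category.assoc, Category.assoc]
    _ = π₂ ≫ y ≫ i := by rw [hy]
    _ = (π₂ ≫ y) ≫ i := by rw [Category.assoc]
    _ = (y₀ ≫ j) ≫ i := by rw [hy₀]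
    _ = (y₀ ≫ kernel.lift ψ (j ≫ i) (by rw [Category.assoc, hψ, cokernel.condition]))
          ≫ kernel.ι ψ := by rw [Category.assoc, Category.assoc, kernel.lift_ι]

/-- Pushout of a mono `ι : X' → X` along an arbitrary `h' : X' → Y` gives a short exact
sequence `0 → Y → W → coker ι → 0`. -/
lemma ses_pushout {X' X Y : C} (ι : X' ⟶ X) [Mono ι] (h' : X' ⟶ Y) :
    (ShortComplex.mk
      (biprod.inr ≫ cokernel.π (biprod.lift ι (-h')) : Y ⟶ _)
      (cokernel.desc (biprod.lift ι (-h')) (biprod.desc (cokernel.π ι) 0) (by simp))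
      (by rw [Category.assoc, cokernel.π_desc, biprod.inr_desc])).ShortExact := by
  have hexd := exact_coker (biprod.lift ι (-h'))
  have hmono : Mono (biprod.inr ≫ cokernel.π (biprod.lift ι (-h'))) := by
    apply Preadditive.mono_of_cancel_zero
    intro T f hf
    obtain ⟨T', π₁, hπ₁, x', hx'⟩ := hexd.exact_up_to_refinements (f ≫ biprod.inr)
      (by simpa only [Category.assoc] using hf)
    dsimp at hx'
    have h1 : x' ≫ ι = 0 := by
      have h2 := hx' =≫ biprod.fst
      simp only [Category.assoc, biprod.inr_fst, comp_zero, biprod.lift_fst] at h2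
      exact h2.symm
    have hx'0 : x' = 0 := zero_of_comp_mono ι h1
    rw [hx'0, zero_comp] at hx'
    have h3 : π₁ ≫ f = 0 := by
      have h4 := hx' =≫ biprod.snd
      simp only [Category.assoc, biprod.inr_snd, Category.comp_id, zero_comp] at h4
      exact h4
    exact zero_of_epi_comp π₁ h3
  have hepi : Epi (cokernel.desc (biprod.lift ι (-h')) (biprod.desc (cokernel.π ι) 0)
      (by simp)) := by
    have h5 : (biprod.inl ≫ cokernel.π (biprod.lift ι (-h'))) ≫
        cokernel.desc (biprod.lift ι (-h')) (biprod.desc (cokernel.π ι) 0) (by simp)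
        = cokernel.π ι := by
      rw [Category.assoc, cokernel.π_desc, biprod.inl_desc]
    exact epi_of_epi_fac h5
  refine ShortComplex.ShortExact.mk' ?_ hmono hepi
  rw [ShortComplex.exact_iff_exact_up_to_refinements]
  intro T x hx
  dsimp at x hx ⊢
  obtain ⟨T', π₁, hπ₁, z, hz⟩ :=
    surjective_up_to_refinements_of_epi (cokernel.π (biprod.lift ι (-h'))) x
  have h1 : (z ≫ biprod.fst) ≫ cokernel.π ι = 0 := by
    have h2 := hz =≫ cokernel.desc (biprod.lift ι (-h')) (biprod.desc (cokernel.π ι) 0)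
      (by simp)
    rw [Category.assoc, Category.assoc, hx, comp_zero, cokernel.π_desc] at h2
    rw [Category.assoc, ← biprod.inl_desc (cokernel.π ι) (0 : Y ⟶ cokernel ι)]
    rw [biprod_desc_eq] at h2
    simp only [Preadditive.comp_add, comp_zero, add_zero, ← Category.assoc] at h2
    simpa [biprod_desc_eq] using h2.symm
  obtain ⟨T'', π₂, hπ₂, x', hx'⟩ := (exact_coker ι).exact_up_to_refinements (z ≫ biprod.fst) h1
  have hz'fst : (π₂ ≫ z - x' ≫ biprod.lift ι (-h')) ≫ biprod.fst = 0 := by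
    rw [Preadditive.sub_comp, Category.assoc, Category.assoc, biprod.lift_fst, ← hx',
      sub_self]
  have hz'' : π₂ ≫ z - x' ≫ biprod.lift ι (-h')
      = ((π₂ ≫ z - x' ≫ biprod.lift ι (-h')) ≫ biprod.snd) ≫ biprod.inr := by
    conv_lhs => rw [← Category.comp_id (π₂ ≫ z - x' ≫ biprod.lift ι (-h')), ← biprod.total]
    rw [Preadditive.comp_add, ← Category.assoc, hz'fst, zero_comp, zero_add, Category.assoc,
      ← Category.assoc]
  refine ⟨T'', π₂ ≫ π₁, epi_comp _ _,
    (π₂ ≫ z - x' ≫ biprod.lift ι (-h')) ≫ biprod.snd, ?_⟩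
  calc (π₂ ≫ π₁) ≫ x = π₂ ≫ z ≫ cokernel.π (biprod.lift ι (-h')) := by
        rw [Category.assoc, hz]
    _ = (π₂ ≫ z - x' ≫ biprod.lift ι (-h')) ≫ cokernel.π (biprod.lift ι (-h')) := by
        rw [Preadditive.sub_comp, Category.assoc, Category.assoc, cokernel.condition,
          comp_zero, sub_zero]
    _ = (((π₂ ≫ z - x' ≫ biprod.lift ι (-h')) ≫ biprod.snd) ≫ biprod.inr)
          ≫ cokernel.π (biprod.lift ι (-h')) := by rw [← hz'']
    _ = ((π₂ ≫ z - x' ≫ biprod.lift ι (-h')) ≫ biprod.snd)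
          ≫ (biprod.inr ≫ cokernel.π (biprod.lift ι (-h'))) := by
        rw [Category.assoc]

/-- Pullback of the sequence `0 → Y₀ → Y → coker j → 0` along `v : S ⟶ coker j` gives
a short exact sequence `0 → Y₀ → P → S → 0` with `P = ker (Y ⊞ S → coker j)`. -/
lemma ses_pullback {Y₀ Y S : C} (j : Y₀ ⟶ Y) [Mono j] (v : S ⟶ cokernel j) :
    (ShortComplex.mk
      (kernel.lift (biprod.desc (cokernel.π j) (-v)) (j ≫ biprod.inl)
        (by simp [cokernel.condition]))
      (kernel.ι (biprod.desc (cokernel.π j) (-v)) ≫ biprod.snd)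
      (by rw [← Category.assoc, kernel.lift_ι, Category.assoc, biprod.inl_snd,
        comp_zero])).ShortExact := by
  have hm0 : Epi (biprod.desc (cokernel.π j) (-v)) :=
    epi_of_epi_fac (biprod.inl_desc (cokernel.π j) (-v))
  have hmono : Mono (kernel.lift (biprod.desc (cokernel.π j) (-v)) (j ≫ biprod.inl)
      (by simp [cokernel.condition])) := by
    have hfac : kernel.lift (biprod.desc (cokernel.π j) (-v)) (j ≫ biprod.inl)
        (by simp [cokernel.condition]) ≫ (kernel.ι _ ≫ biprod.fst) = j := by
      rw [← Category.assoc, kernel.lift_ι, Category.assoc, biprod.inl_fst, Category.comp_id]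
    exact mono_of_mono_fac hfac
  have hepi : Epi (kernel.ι (biprod.desc (cokernel.π j) (-v)) ≫ biprod.snd) := by
    apply Preadditive.epi_of_cancel_zero
    intro T c hc
    obtain ⟨c', hc'⟩ := desc_of_comp_zero (ses_ker (biprod.desc (cokernel.π j) (-v)))
      (biprod.snd ≫ c) (by rw [← Category.assoc]; exact hc)
    dsimp at hc'
    have h1 : c' = 0 := by
      have h2 := biprod.inl ≫= hc'
      rw [← Category.assoc, ← Category.assoc, biprod.inl_desc, biprod.inl_snd, zero_comp] at h2
      exact zero_of_epi_comp (cokernel.π j) h2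
    have h3 : (biprod.snd : Y ⊞ S ⟶ S) ≫ c = 0 := by rw [← hc', h1, comp_zero]
    have h4 := biprod.inr ≫= h3
    rw [← Category.assoc, biprod.inr_snd, Category.id_comp, comp_zero] at h4
    exact h4
  refine ShortComplex.ShortExact.mk' ?_ hmono hepi
  rw [ShortComplex.exact_iff_exact_up_to_refinements]
  intro T x hx
  dsimp at x hx ⊢
  have hzsnd : (x ≫ kernel.ι (biprod.desc (cokernel.π j) (-v))) ≫ biprod.snd = 0 := by
    rw [Category.assoc]; rw [← Category.assoc] at hx; rw [← Category.assoc]; exact hx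
  have hz : x ≫ kernel.ι (biprod.desc (cokernel.π j) (-v))
      = ((x ≫ kernel.ι (biprod.desc (cokernel.π j) (-v))) ≫ biprod.fst) ≫ biprod.inl := by
    conv_lhs => rw [← Category.comp_id (x ≫ kernel.ι (biprod.desc (cokernel.π j) (-v))),
      ← biprod.total]
    rw [Preadditive.comp_add, ← Category.assoc, ← Category.assoc, hzsnd, zero_comp, add_zero]
  have h1 : ((x ≫ kernel.ι (biprod.desc (cokernel.π j) (-v))) ≫ biprod.fst)
      ≫ cokernel.π j = 0 := by
    have h2 : (x ≫ kernel.ι (biprod.desc (cokernel.π j) (-v)))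
        ≫ biprod.desc (cokernel.π j) (-v) = 0 := by
      rw [Category.assoc, kernel.condition, comp_zero]
    rw [hz] at h2
    rw [Category.assoc] at h2
    rw [biprod.inl_desc] at h2
    exact h2
  obtain ⟨T', π₂, hπ₂, y₀, hy₀⟩ := (exact_coker j).exact_up_to_refinements _ h1
  refine ⟨T', π₂, hπ₂, y₀, ?_⟩
  rw [← cancel_mono (kernel.ι (biprod.desc (cokernel.π j) (-v)))]
  calc (π₂ ≫ x) ≫ kernel.ι (biprod.desc (cokernel.π j) (-v))
      = π₂ ≫ ((x ≫ kernel.ι (biprod.desc (cokernel.π j) (-v))) ≫ biprod.fst) ≫ biprod.inl := by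
        rw [Category.assoc, ← hz]
    _ = (y₀ ≫ j) ≫ biprod.inl := by rw [← Category.assoc, hy₀, Category.assoc]
    _ = (y₀ ≫ kernel.lift (biprod.desc (cokernel.π j) (-v)) (j ≫ biprod.inl)
          (by simp [cokernel.condition])) ≫ kernel.ι (biprod.desc (cokernel.π j) (-v)) := by
        rw [Category.assoc, Category.assoc, kernel.lift_ι]

end Chases

section FmLemmas

variable {A : Type*} [Category A] [Abelian A] {B : Type*} [Category B] [Abelian B]
  {Z : A → Prop} (F : ObjectProperty.FullSubcategory Z ⥤ B)

/-- `F.map` on morphisms between objects of the full subcategory. -/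
abbrev Fm {X Y : A} (hX : Z X) (hY : Z Y) (f : X ⟶ Y) : F.obj ⟨X, hX⟩ ⟶ F.obj ⟨Y, hY⟩ :=
  F.map (X := ⟨X, hX⟩) (Y := ⟨Y, hY⟩) (ObjectProperty.homMk f)

lemma Fm_comp {X Y W : A} (hX : Z X) (hY : Z Y) (hW : Z W) (f : X ⟶ Y) (g : Y ⟶ W) :
    Fm F hX hW (f ≫ g) = Fm F hX hY f ≫ Fm F hY hW g :=
  F.map_comp (X := ⟨X, hX⟩) (Y := ⟨Y, hY⟩) (Z := ⟨W, hW⟩) (ObjectProperty.homMk f)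
    (ObjectProperty.homMk g)

lemma Fm_id {X : A} (hX : Z X) : Fm F hX hX (𝟙 X) = 𝟙 (F.obj ⟨X, hX⟩) :=
  F.map_id ⟨X, hX⟩

variable [F.Additive]

lemma Fm_zero {X Y : A} (hX : Z X) (hY : Z Y) : Fm F hX hY 0 = 0 := by
  rw [← F.map_zero (X := ⟨X, hX⟩) (Y := ⟨Y, hY⟩)]; rfl

lemma Fm_add {X Y : A} (hX : Z X) (hY : Z Y) (f g : X ⟶ Y) :
    Fm F hX hY (f + g) = Fm F hX hY f + Fm F hX hY g :=
  by rw [← F.map_add]; rfl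

lemma Fm_sub {X Y : A} (hX : Z X) (hY : Z Y) (f g : X ⟶ Y) :
    Fm F hX hY (f - g) = Fm F hX hY f - Fm F hX hY g :=
  by rw [← F.map_sub]; rfl

lemma Fm_neg {X Y : A} (hX : Z X) (hY : Z Y) (f : X ⟶ Y) :
    Fm F hX hY (-f) = -Fm F hX hY f :=
  by rw [← F.map_neg]; rfl

lemma Fm_isZero {X : A} (hX : Z X) (h : IsZero X) : IsZero (F.obj ⟨X, hX⟩) := by
  rw [IsZero.iff_id_eq_zero]
  have h0 : (𝟙 X : X ⟶ X) = 0 := (IsZero.iff_id_eq_zero X).1 h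
  calc 𝟙 (F.obj ⟨X, hX⟩) = Fm F hX hX (𝟙 X) := (Fm_id F hX).symm
    _ = 0 := by rw [h0, Fm_zero]

end FmLemmas

set_option maxHeartbeats 1000000 in
/-- Appendix A Lemma: full faithfulness from the simple case. Let `𝒞` be
the full subcategory of an abelian category `𝒜` (with enough projectives) on a class `Z`
of objects which is Serre (closed under subobjects, quotients and extensions) and all of
whose objects have finite length, and let `F : 𝒞 ⥤ ℬ` be an exact additive functor into
an abelian category `ℬ` with enough projectives. Assume (i) for simple objects `X, Y` of
`𝒞` the map `Hom(X, Y) → Hom(F X, F Y)` is bijective and the map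
`Ext¹(X, Y) → Ext¹(F X, F Y)` is injective (injectivity of this group homomorphism being
encoded by triviality of its kernel: if the `F`-image of a short exact sequence
`0 → Y → E → X → 0` splits, then so does the sequence itself); (ii) `F` sends simple
objects to simple objects; (iii) `F X ≅ F Y` implies `X ≅ Y` for simples `X, Y` of `𝒞`.
Then for all objects `X, Y` of `𝒞`, the map `Hom(X, Y) → Hom(F X, F Y)` is bijective
(`F` is fully faithful) and the map `Ext¹(X, Y) → Ext¹(F X, F Y)` is injective. -/
theorem fully_faithful_from_simple_case
    {A : Type*} [Category A] [Abelian A] [EnoughProjectives A]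
    {B : Type*} [Category B] [Abelian B] [EnoughProjectives B]
    (Z : A → Prop)
    (hSub : ∀ (X Y : A) (i : X ⟶ Y), Mono i → Z Y → Z X)
    (hQuot : ∀ (X Y : A) (p : X ⟶ Y), Epi p → Z X → Z Y)
    (hExtClosed : ∀ S : ShortComplex A, S.ShortExact → Z S.X₁ → Z S.X₃ → Z S.X₂)
    (hLen : ∀ X : A, Z X → FiniteLength X)
    (F : ObjectProperty.FullSubcategory Z ⥤ B) [F.Additive]
    (hFexact : ∀ (S : ShortComplex A), S.ShortExact →
      ∀ (h1 : Z S.X₁) (h2 : Z S.X₂) (h3 : Z S.X₃),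
      ∃ w : F.map (X := ⟨S.X₁, h1⟩) (Y := ⟨S.X₂, h2⟩) (ObjectProperty.homMk S.f) ≫
          F.map (X := ⟨S.X₂, h2⟩) (Y := ⟨S.X₃, h3⟩) (ObjectProperty.homMk S.g) = 0,
        (ShortComplex.mk (F.map (X := ⟨S.X₁, h1⟩) (Y := ⟨S.X₂, h2⟩) (ObjectProperty.homMk S.f))
          (F.map (X := ⟨S.X₂, h2⟩) (Y := ⟨S.X₃, h3⟩) (ObjectProperty.homMk S.g)) w).ShortExact)
    (hHomSimple : ∀ X Y : ObjectProperty.FullSubcategory Z, Simple X.obj → Simple Y.obj →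
      Function.Bijective (fun f : X ⟶ Y => F.map f))
    (hExtSimple : ∀ (X Y : A) (hX : Z X) (hY : Z Y), Simple X → Simple Y →
      ∀ (E : A) (hE : Z E) (i : Y ⟶ E) (p : E ⟶ X) (w : i ≫ p = 0),
        (ShortComplex.mk i p w).ShortExact →
        (∃ r : F.obj ⟨E, hE⟩ ⟶ F.obj ⟨Y, hY⟩,
          F.map (X := ⟨Y, hY⟩) (Y := ⟨E, hE⟩) (ObjectProperty.homMk i) ≫ r = 𝟙 (F.obj ⟨Y, hY⟩)) →
        (∃ r : E ⟶ Y, i ≫ r = 𝟙 Y))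
    (hSimple : ∀ X : ObjectProperty.FullSubcategory Z, Simple X.obj → Simple (F.obj X))
    (hIsoSimple : ∀ X Y : ObjectProperty.FullSubcategory Z, Simple X.obj → Simple Y.obj →
      Nonempty (F.obj X ≅ F.obj Y) → Nonempty (X.obj ≅ Y.obj)) :
    (∀ X Y : ObjectProperty.FullSubcategory Z, Function.Bijective (fun f : X ⟶ Y => F.map f)) ∧
    (∀ (X Y : A) (hX : Z X) (hY : Z Y) (E : A) (hE : Z E)
        (i : Y ⟶ E) (p : E ⟶ X) (w : i ≫ p = 0),
      (ShortComplex.mk i p w).ShortExact →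
      (∃ r : F.obj ⟨E, hE⟩ ⟶ F.obj ⟨Y, hY⟩,
        F.map (X := ⟨Y, hY⟩) (Y := ⟨E, hE⟩) (ObjectProperty.homMk i) ≫ r = 𝟙 (F.obj ⟨Y, hY⟩)) →
      (∃ r : E ⟶ Y, i ≫ r = 𝟙 Y)) := by
  -- wrapper for the exactness hypothesis
  have hFex : ∀ {X₁ X₂ X₃ : A} (h1 : Z X₁) (h2 : Z X₂) (h3 : Z X₃) (f : X₁ ⟶ X₂) (g : X₂ ⟶ X₃)
      (w : f ≫ g = 0) (_ : (ShortComplex.mk f g w).ShortExact)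
      (wB : Fm F h1 h2 f ≫ Fm F h2 h3 g = 0),
      (ShortComplex.mk (Fm F h1 h2 f) (Fm F h2 h3 g) wB).ShortExact := by
    intro X₁ X₂ X₃ h1 h2 h3 f g w hs wB
    obtain ⟨w', hw'⟩ := hFexact (ShortComplex.mk f g w) hs h1 h2 h3
    exact hw'
  have FmwB : ∀ {X₁ X₂ X₃ : A} (h1 : Z X₁) (h2 : Z X₂) (h3 : Z X₃) (f : X₁ ⟶ X₂) (g : X₂ ⟶ X₃)
      (w : f ≫ g = 0), Fm F h1 h2 f ≫ Fm F h2 h3 g = 0 := by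
    intro X₁ X₂ X₃ h1 h2 h3 f g w
    rw [← Fm_comp F h1 h2 h3 f g, w, Fm_zero]
  -- Phase 1a: faithfulness, simple source
  have phase1s : ∀ (n : ℕ) (Y : A) (hY : Z Y), LengthLE n Y → ∀ (S : A) (hS : Z S), Simple S →
      ∀ f : S ⟶ Y, Fm F hS hY f = 0 → f = 0 := by
    intro n
    induction n using Nat.strong_induction_on with
    | _ n ih =>
    intro Y hY hlen S hS hSs f hf
    by_cases hz : IsZero Y
    · exact hz.eq_zero_of_tgt f
    obtain ⟨Y₀, j, hjm, hY₀s, m, hm, hcok⟩ := exists_simple_sub n Y hlen hz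
    haveI := hjm
    have hY₀ : Z Y₀ := hSub _ _ j hjm hY
    have hq : Z (cokernel j) := hQuot _ _ (cokernel.π j) inferInstance hY
    have sesY := ses_coker j
    have h2 : f ≫ cokernel.π j = 0 := by
      refine ih m (Nat.lt_of_lt_of_le (Nat.lt_succ_self m) hm) (cokernel j) hq hcok S hS hSs _ ?_
      rw [Fm_comp F hS hY hq f (cokernel.π j), hf, zero_comp]
    obtain ⟨g, hg⟩ := lift_of_comp_zero sesY f h2
    have hFg : Fm F hS hY₀ g = 0 := by
      haveI : Mono (Fm F hY₀ hY j) :=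
        (hFex hY₀ hY hq j (cokernel.π j) (cokernel.condition j) sesY
          (FmwB hY₀ hY hq j (cokernel.π j) (cokernel.condition j))).mono_f
      have : Fm F hS hY₀ g ≫ Fm F hY₀ hY j = 0 := by
        rw [← Fm_comp F hS hY₀ hY g j, hg, hf]
      exact zero_of_comp_mono _ this
    have hg0 : g = 0 := by
      have := (hHomSimple ⟨S, hS⟩ ⟨Y₀, hY₀⟩ hSs hY₀s).1 (a₁ := ObjectProperty.homMk g)
        (a₂ := ObjectProperty.homMk 0) (by
          show Fm F hS hY₀ g = Fm F hS hY₀ 0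
          rw [hFg, Fm_zero])
      exact congrArg (fun h => h.hom) this
    rw [← hg, hg0, zero_comp]
  -- Phase 1b: faithfulness in general
  have phase1 : ∀ (n : ℕ) (X : A) (hX : Z X), LengthLE n X → ∀ (Y : A) (hY : Z Y),
      ∀ f : X ⟶ Y, Fm F hX hY f = 0 → f = 0 := by
    intro n
    induction n using Nat.strong_induction_on with
    | _ n ih =>
    intro X hX hlen Y hY f hf
    match n, hlen with
    | 0, hlen => exact hlen.eq_zero_of_src f
    | (n+1), Or.inl hz => exact hz.eq_zero_of_src f
    | (n+1), Or.inr ⟨X', ι, hιm, hXs, hlen'⟩ =>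
      haveI := hιm
      haveI := hXs
      have hX' : Z X' := hSub _ _ ι hιm hX
      have hSZ : Z (cokernel ι) := hQuot _ _ (cokernel.π ι) inferInstance hX
      have sesX := ses_coker ι
      have h1 : ι ≫ f = 0 := by
        refine ih n (Nat.lt_succ_self n) X' hX' hlen' Y hY _ ?_
        rw [Fm_comp F hX' hX hY ι f, hf, comp_zero]
      obtain ⟨fbar, hfbar⟩ := desc_of_comp_zero sesX f h1
      have hFfbar : Fm F hSZ hY fbar = 0 := by
        haveI : Epi (Fm F hX hSZ (cokernel.π ι)) :=
          (hFex hX' hX hSZ ι (cokernel.π ι) (cokernel.condition ι) sesX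
            (FmwB hX' hX hSZ ι (cokernel.π ι) (cokernel.condition ι))).epi_g
        have : Fm F hX hSZ (cokernel.π ι) ≫ Fm F hSZ hY fbar = 0 := by
          rw [← Fm_comp F hX hSZ hY (cokernel.π ι) fbar, hfbar, hf]
        exact zero_of_epi_comp _ this
      obtain ⟨nY, hnY⟩ := hLen Y hY
      have : fbar = 0 := phase1s nY Y hY hnY (cokernel ι) hSZ hXs fbar hFfbar
      rw [← hfbar, this, comp_zero]
  -- Phase 2: for S simple, fullness of Hom(S,Y) and Ext-injectivity of Ext(S,Y),
  -- by induction on the length of Y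
  have phase2 : ∀ (n : ℕ) (Y : A) (hY : Z Y), LengthLE n Y → ∀ (S : A) (hS : Z S), Simple S →
      (∀ g : F.obj ⟨S, hS⟩ ⟶ F.obj ⟨Y, hY⟩, ∃ f : S ⟶ Y, Fm F hS hY f = g) ∧
      (∀ (E : A) (hE : Z E) (i : Y ⟶ E) (p : E ⟶ S) (w : i ≫ p = 0),
        (ShortComplex.mk i p w).ShortExact →
        (∃ r, Fm F hY hE i ≫ r = 𝟙 (F.obj ⟨Y, hY⟩)) → ∃ r : E ⟶ Y, i ≫ r = 𝟙 Y) := by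
    intro n
    induction n using Nat.strong_induction_on with
    | _ n ih =>
    intro Y hY hlen S hS hSs
    by_cases hz : IsZero Y
    · constructor
      · intro g
        refine ⟨0, ?_⟩
        rw [Fm_zero]
        exact ((Fm_isZero F hY hz).eq_zero_of_tgt g).symm
      · intro E hE i p w hses hr
        refine ⟨0, ?_⟩
        rw [comp_zero]
        exact (hz.eq_zero_of_src (𝟙 Y)).symm
    obtain ⟨Y₀, j, hjm, hY₀s, m, hm, hcok⟩ := exists_simple_sub n Y hlen hz
    haveI := hjm
    have hmlt : m < n := Nat.lt_of_lt_of_le (Nat.lt_succ_self m) hm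
    have hY₀ : Z Y₀ := hSub _ _ j hjm hY
    have hq : Z (cokernel j) := hQuot _ _ (cokernel.π j) inferInstance hY
    have sesY := ses_coker j
    have FsesY := hFex hY₀ hY hq j (cokernel.π j) (cokernel.condition j) sesY
      (FmwB hY₀ hY hq j (cokernel.π j) (cokernel.condition j))
    have ihfull := fun (S' : A) (hS' : Z S') (hS's : Simple S') =>
      (ih m hmlt (cokernel j) hq hcok S' hS' hS's).1
    constructor
    · -- fullness for (S, Y)
      intro g
      obtain ⟨v, hv⟩ := ihfull S hS hSs (g ≫ Fm F hY hq (cokernel.π j))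
      haveI hm0epi : Epi (biprod.desc (cokernel.π j) (-v)) :=
        epi_of_epi_fac (biprod.inl_desc (cokernel.π j) (-v))
      have sesPK := ses_ker (biprod.desc (cokernel.π j) (-v))
      have hYS : Z (Y ⊞ S) := hExtClosed _ (ses_biprod Y S) hY hS
      have hP : Z (kernel (biprod.desc (cokernel.π j) (-v))) :=
        hSub _ _ (kernel.ι _) inferInstance hYS
      obtain ⟨jP, wP, sesP, hjP⟩ : ∃ (jP : Y₀ ⟶ kernel (biprod.desc (cokernel.π j) (-v)))
          (wP : jP ≫ (kernel.ι (biprod.desc (cokernel.π j) (-v)) ≫ biprod.snd) = 0),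
          (ShortComplex.mk jP (kernel.ι (biprod.desc (cokernel.π j) (-v)) ≫ biprod.snd)
            wP).ShortExact ∧
          jP ≫ kernel.ι (biprod.desc (cokernel.π j) (-v)) = j ≫ biprod.inl :=
        ⟨_, _, ses_pullback j v, kernel.lift_ι _ _ _⟩
      have FsesPK := hFex hP hYS hq (kernel.ι _) (biprod.desc (cokernel.π j) (-v))
        (kernel.condition _) sesPK (FmwB hP hYS hq _ _ (kernel.condition _))
      have FsesP := hFex hY₀ hP hS jP (kernel.ι _ ≫ biprod.snd) wP sesP
        (FmwB hY₀ hP hS _ _ wP)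
      have hμ : (g ≫ Fm F hY hYS biprod.inl + Fm F hS hYS biprod.inr)
          ≫ Fm F hYS hq (biprod.desc (cokernel.π j) (-v)) = 0 := by
        have e1 : Fm F hY hYS biprod.inl ≫ Fm F hYS hq (biprod.desc (cokernel.π j) (-v))
            = Fm F hY hq (cokernel.π j) := by
          rw [← Fm_comp F hY hYS hq, biprod.inl_desc]
        have e2 : Fm F hS hYS biprod.inr ≫ Fm F hYS hq (biprod.desc (cokernel.π j) (-v))
            = -Fm F hS hq v := by
          rw [← Fm_comp F hS hYS hq, biprod.inr_desc, Fm_neg]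
        rw [Preadditive.add_comp, Category.assoc, e1, e2, hv, add_neg_cancel]
      obtain ⟨σ, hσ⟩ := lift_of_comp_zero FsesPK _ hμ
      have hσt : σ ≫ Fm F hP hS (kernel.ι (biprod.desc (cokernel.π j) (-v)) ≫ biprod.snd)
          = 𝟙 _ := by
        have e1 : Fm F hY hYS biprod.inl ≫ Fm F hYS hS biprod.snd = 0 := by
          rw [← Fm_comp F hY hYS hS, biprod.inl_snd, Fm_zero]
        have e2 : Fm F hS hYS biprod.inr ≫ Fm F hYS hS biprod.snd = 𝟙 _ := by
          rw [← Fm_comp F hS hYS hS, biprod.inr_snd, Fm_id]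
        rw [Fm_comp F hP hYS hS _ biprod.snd, ← Category.assoc, hσ, Preadditive.add_comp,
          Category.assoc, e1, e2, comp_zero, zero_add]
      obtain ⟨ρP, hρP⟩ := retr_of_sec FsesP hσt
      obtain ⟨rP, hrP⟩ := hExtSimple S Y₀ hS hY₀ hSs hY₀s _ hP jP
        (kernel.ι _ ≫ biprod.snd) wP sesP ⟨ρP, hρP⟩
      obtain ⟨sP, hsP⟩ := sec_of_retr sesP hrP
      have hkrel : kernel.ι (biprod.desc (cokernel.π j) (-v)) ≫ biprod.fst ≫ cokernel.π j
          = kernel.ι (biprod.desc (cokernel.π j) (-v)) ≫ biprod.snd ≫ v := by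
        have h3 : kernel.ι (biprod.desc (cokernel.π j) (-v))
            ≫ (biprod.fst ≫ cokernel.π j + biprod.snd ≫ (-v)) = 0 := by
          rw [← biprod_desc_eq]; exact kernel.condition _
        simp only [Preadditive.comp_add, Preadditive.comp_neg, Category.assoc] at h3
        rwa [add_neg_eq_zero] at h3
      have hh₀π : (sP ≫ kernel.ι (biprod.desc (cokernel.π j) (-v)) ≫ biprod.fst)
          ≫ cokernel.π j = v := by
        calc (sP ≫ kernel.ι (biprod.desc (cokernel.π j) (-v)) ≫ biprod.fst) ≫ cokernel.π j
            = sP ≫ kernel.ι (biprod.desc (cokernel.π j) (-v)) ≫ biprod.fst ≫ cokernel.π j := by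
              simp only [Category.assoc]
          _ = sP ≫ kernel.ι (biprod.desc (cokernel.π j) (-v)) ≫ biprod.snd ≫ v := by
              rw [hkrel]
          _ = (sP ≫ kernel.ι (biprod.desc (cokernel.π j) (-v)) ≫ biprod.snd) ≫ v := by
              simp only [Category.assoc]
          _ = 𝟙 S ≫ v := by rw [hsP]
          _ = v := Category.id_comp v
      have hg' : (g - Fm F hS hY (sP ≫ kernel.ι (biprod.desc (cokernel.π j) (-v))
          ≫ biprod.fst)) ≫ Fm F hY hq (cokernel.π j) = 0 := by
        rw [Preadditive.sub_comp, ← Fm_comp F hS hY hq, hh₀π, hv, sub_self]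
      obtain ⟨w', hw'⟩ := lift_of_comp_zero FsesY _ hg'
      obtain ⟨w₀, hw₀⟩ := (hHomSimple ⟨S, hS⟩ ⟨Y₀, hY₀⟩ hSs hY₀s).2 w'
      refine ⟨(sP ≫ kernel.ι (biprod.desc (cokernel.π j) (-v)) ≫ biprod.fst)
        + w₀.hom ≫ j, ?_⟩
      rw [Fm_add F hS hY, Fm_comp F hS hY₀ hY w₀.hom j,
        show Fm F hS hY₀ w₀.hom = w' from hw₀, hw']
      abel
    · -- Ext-injectivity for (S, Y)
      intro E hE i p w sesE hρ0
      obtain ⟨ρ, hρ⟩ := hρ0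
      haveI : Mono i := sesE.mono_f
      haveI : Mono (j ≫ i) := mono_comp _ _
      obtain ⟨abar, qbar, wbar, sesEbar, hπa, hπq⟩ : ∃ (abar : cokernel j ⟶ cokernel (j ≫ i))
          (qbar : cokernel (j ≫ i) ⟶ S) (wbar : abar ≫ qbar = 0),
          (ShortComplex.mk abar qbar wbar).ShortExact ∧
          (cokernel.π j ≫ abar = i ≫ cokernel.π (j ≫ i)) ∧
          (cokernel.π (j ≫ i) ≫ qbar = p) :=
        ⟨_, _, _, ses_quot j i p w sesE, by simp [cokernel.map], cokernel.π_desc _ _ _⟩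
      have sesji := ses_coker (j ≫ i)
      have hEbar : Z (cokernel (j ≫ i)) := hQuot _ _ (cokernel.π (j ≫ i)) inferInstance hE
      have Fsesji := hFex hY₀ hE hEbar (j ≫ i) (cokernel.π (j ≫ i)) (cokernel.condition _)
        sesji (FmwB hY₀ hE hEbar _ _ (cokernel.condition _))
      have hcond : Fm F hY₀ hE (j ≫ i) ≫ (ρ ≫ Fm F hY hq (cokernel.π j)) = 0 := by
        calc Fm F hY₀ hE (j ≫ i) ≫ ρ ≫ Fm F hY hq (cokernel.π j)
            = Fm F hY₀ hY j ≫ (Fm F hY hE i ≫ ρ) ≫ Fm F hY hq (cokernel.π j) := by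
              rw [Fm_comp F hY₀ hY hE j i]; simp only [Category.assoc]
          _ = Fm F hY₀ hY j ≫ Fm F hY hq (cokernel.π j) := by rw [hρ, Category.id_comp]
          _ = 0 := by rw [← Fm_comp F hY₀ hY hq, cokernel.condition, Fm_zero]
      obtain ⟨rB, hrB⟩ := desc_of_comp_zero Fsesji _ hcond
      have haB : Fm F hq hEbar abar ≫ rB = 𝟙 _ := by
        haveI : Epi (Fm F hY hq (cokernel.π j)) := FsesY.epi_g
        rw [← cancel_epi (Fm F hY hq (cokernel.π j))]
        calc Fm F hY hq (cokernel.π j) ≫ Fm F hq hEbar abar ≫ rB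
            = Fm F hY hEbar (cokernel.π j ≫ abar) ≫ rB := by
              rw [Fm_comp F hY hq hEbar, Category.assoc]
          _ = Fm F hY hE i ≫ Fm F hE hEbar (cokernel.π (j ≫ i)) ≫ rB := by
              rw [hπa, Fm_comp F hY hE hEbar, Category.assoc]
          _ = Fm F hY hE i ≫ ρ ≫ Fm F hY hq (cokernel.π j) := by rw [hrB]
          _ = Fm F hY hq (cokernel.π j) ≫ 𝟙 _ := by
              rw [← Category.assoc, hρ, Category.id_comp, Category.comp_id]
      obtain ⟨r₀, hr₀⟩ := (ih m hmlt (cokernel j) hq hcok S hS hSs).2 (cokernel (j ≫ i)) hEbar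
        abar qbar wbar sesEbar ⟨rB, haB⟩
      have FsesEbar := hFex hq hEbar hS abar qbar wbar sesEbar (FmwB hq hEbar hS _ _ wbar)
      have hε0 : Fm F hq hEbar abar ≫ (rB - Fm F hEbar hq r₀) = 0 := by
        rw [Preadditive.comp_sub, haB, ← Fm_comp F hq hEbar hq, hr₀, Fm_id, sub_self]
      obtain ⟨ε, hε⟩ := desc_of_comp_zero FsesEbar _ hε0
      obtain ⟨φ, hφ⟩ := ihfull S hS hSs ε
      have hra : abar ≫ (r₀ + qbar ≫ φ) = 𝟙 _ := by
        rw [Preadditive.comp_add, hr₀, ← Category.assoc, wbar, zero_comp, add_zero]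
      have hFr : Fm F hEbar hq (r₀ + qbar ≫ φ) = rB := by
        rw [Fm_add F hEbar hq, Fm_comp F hEbar hS hq qbar φ,
          show Fm F hS hq φ = ε from hφ, hε]
        abel
      have hψA : i ≫ (cokernel.π (j ≫ i) ≫ (r₀ + qbar ≫ φ)) = cokernel.π j := by
        rw [← Category.assoc, ← hπa, Category.assoc, hra, Category.comp_id]
      obtain ⟨j₁, w₁, sesE₁, hj₁⟩ : ∃ (j₁ : Y₀ ⟶ kernel (cokernel.π (j ≫ i) ≫ (r₀ + qbar ≫ φ)))
          (w₁ : j₁ ≫ (kernel.ι (cokernel.π (j ≫ i) ≫ (r₀ + qbar ≫ φ)) ≫ p) = 0),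
          (ShortComplex.mk j₁ (kernel.ι (cokernel.π (j ≫ i) ≫ (r₀ + qbar ≫ φ)) ≫ p)
            w₁).ShortExact ∧
          j₁ ≫ kernel.ι (cokernel.π (j ≫ i) ≫ (r₀ + qbar ≫ φ)) = j ≫ i :=
        ⟨_, _, ses_sub j i p w sesE _ hψA, kernel.lift_ι _ _ _⟩
      have hE₁ : Z (kernel (cokernel.π (j ≫ i) ≫ (r₀ + qbar ≫ φ))) :=
        hSub _ _ (kernel.ι _) inferInstance hE
      have hcond2 : (Fm F hE₁ hE (kernel.ι (cokernel.π (j ≫ i) ≫ (r₀ + qbar ≫ φ))) ≫ ρ)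
          ≫ Fm F hY hq (cokernel.π j) = 0 := by
        calc (Fm F hE₁ hE (kernel.ι (cokernel.π (j ≫ i) ≫ (r₀ + qbar ≫ φ))) ≫ ρ)
              ≫ Fm F hY hq (cokernel.π j)
            = Fm F hE₁ hE (kernel.ι (cokernel.π (j ≫ i) ≫ (r₀ + qbar ≫ φ)))
                ≫ Fm F hE hEbar (cokernel.π (j ≫ i)) ≫ rB := by
              rw [Category.assoc, ← hrB]
          _ = Fm F hE₁ hE (kernel.ι (cokernel.π (j ≫ i) ≫ (r₀ + qbar ≫ φ)))
                ≫ Fm F hE hEbar (cokernel.π (j ≫ i)) ≫ Fm F hEbar hq (r₀ + qbar ≫ φ) := by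
              rw [hFr]
          _ = Fm F hE₁ hq (kernel.ι (cokernel.π (j ≫ i) ≫ (r₀ + qbar ≫ φ))
                ≫ (cokernel.π (j ≫ i) ≫ (r₀ + qbar ≫ φ))) := by
              rw [Fm_comp F hE₁ hE hq, Fm_comp F hE hEbar hq]
          _ = 0 := by rw [kernel.condition, Fm_zero]
      obtain ⟨ρ₁, hρ₁⟩ := lift_of_comp_zero FsesY _ hcond2
      have hρ₁r : Fm F hY₀ hE₁ j₁ ≫ ρ₁ = 𝟙 _ := by
        haveI : Mono (Fm F hY₀ hY j) := FsesY.mono_f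
        rw [← cancel_mono (Fm F hY₀ hY j)]
        calc (Fm F hY₀ hE₁ j₁ ≫ ρ₁) ≫ Fm F hY₀ hY j
            = Fm F hY₀ hE₁ j₁
                ≫ Fm F hE₁ hE (kernel.ι (cokernel.π (j ≫ i) ≫ (r₀ + qbar ≫ φ))) ≫ ρ := by
              rw [Category.assoc, hρ₁]
          _ = Fm F hY₀ hE (j ≫ i) ≫ ρ := by
              rw [← Category.assoc, ← Fm_comp F hY₀ hE₁ hE, hj₁]
          _ = Fm F hY₀ hY j ≫ Fm F hY hE i ≫ ρ := by
              rw [Fm_comp F hY₀ hY hE, Category.assoc]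
          _ = 𝟙 _ ≫ Fm F hY₀ hY j := by rw [hρ, Category.comp_id, Category.id_comp]
      obtain ⟨r₁, hr₁⟩ := hExtSimple S Y₀ hS hY₀ hSs hY₀s _ hE₁ j₁
        (kernel.ι (cokernel.π (j ≫ i) ≫ (r₀ + qbar ≫ φ)) ≫ p) w₁ sesE₁ ⟨ρ₁, hρ₁r⟩
      obtain ⟨s₁, hs₁⟩ := sec_of_retr sesE₁ hr₁
      have hsec : (s₁ ≫ kernel.ι (cokernel.π (j ≫ i) ≫ (r₀ + qbar ≫ φ))) ≫ p = 𝟙 S := by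
        rw [Category.assoc]; exact hs₁
      exact retr_of_sec sesE hsec
  -- Phase 3: fullness in general, by induction on the length of X
  have phase3 : ∀ (n : ℕ) (X : A) (hX : Z X), LengthLE n X → ∀ (Y : A) (hY : Z Y)
      (g : F.obj ⟨X, hX⟩ ⟶ F.obj ⟨Y, hY⟩), ∃ f : X ⟶ Y, Fm F hX hY f = g := by
    intro n
    induction n using Nat.strong_induction_on with
    | _ n ih =>
    intro X hX hlen Y hY g
    match n, hlen with
    | 0, hlen =>
      refine ⟨0, ?_⟩
      rw [Fm_zero]
      exact ((Fm_isZero F hX hlen).eq_zero_of_src g).symm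
    | (n+1), Or.inl hz =>
      refine ⟨0, ?_⟩
      rw [Fm_zero]
      exact ((Fm_isZero F hX hz).eq_zero_of_src g).symm
    | (n+1), Or.inr ⟨X', ι, hιm, hXs, hlen'⟩ =>
      haveI := hιm
      have hX' : Z X' := hSub _ _ ι hιm hX
      have hSZ : Z (cokernel ι) := hQuot _ _ (cokernel.π ι) inferInstance hX
      have sesX := ses_coker ι
      have FsesX := hFex hX' hX hSZ ι (cokernel.π ι) (cokernel.condition ι) sesX
        (FmwB hX' hX hSZ ι (cokernel.π ι) (cokernel.condition ι))
      obtain ⟨h', hh'⟩ := ih n (Nat.lt_succ_self n) X' hX' hlen' Y hY (Fm F hX' hX ι ≫ g)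
      haveI hdm : Mono (biprod.lift ι (-h')) := mono_of_mono_fac (biprod.lift_fst ι (-h'))
      obtain ⟨wmap, wW, sesW, hπwmap⟩ : ∃ (wmap : cokernel (biprod.lift ι (-h')) ⟶ cokernel ι)
          (wW : (biprod.inr ≫ cokernel.π (biprod.lift ι (-h'))) ≫ wmap = 0),
          (ShortComplex.mk (biprod.inr ≫ cokernel.π (biprod.lift ι (-h'))) wmap
            wW).ShortExact ∧
          cokernel.π (biprod.lift ι (-h')) ≫ wmap = biprod.desc (cokernel.π ι) 0 :=
        ⟨_, _, ses_pushout ι h', cokernel.π_desc _ _ _⟩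
      have hXY : Z (X ⊞ Y) := hExtClosed _ (ses_biprod X Y) hX hY
      have hW : Z (cokernel (biprod.lift ι (-h'))) :=
        hQuot _ _ (cokernel.π (biprod.lift ι (-h'))) inferInstance hXY
      have ses_d := ses_coker (biprod.lift ι (-h'))
      have Fses_d := hFex hX' hXY hW (biprod.lift ι (-h')) (cokernel.π _)
        (cokernel.condition _) ses_d (FmwB hX' hXY hW _ _ (cokernel.condition _))
      have hud : Fm F hX' hXY (biprod.lift ι (-h'))
          ≫ (Fm F hXY hX biprod.fst ≫ g + Fm F hXY hY biprod.snd) = 0 := by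
        have e1 : Fm F hX' hXY (biprod.lift ι (-h')) ≫ Fm F hXY hX biprod.fst
            = Fm F hX' hX ι := by
          rw [← Fm_comp F hX' hXY hX, biprod.lift_fst]
        have e2 : Fm F hX' hXY (biprod.lift ι (-h')) ≫ Fm F hXY hY biprod.snd
            = -Fm F hX' hY h' := by
          rw [← Fm_comp F hX' hXY hY, biprod.lift_snd, Fm_neg]
        rw [Preadditive.comp_add, ← Category.assoc, e1, e2, hh', add_neg_cancel]
      obtain ⟨ρW, hρW⟩ := desc_of_comp_zero Fses_d _ hud
      have haW : Fm F hY hW (biprod.inr ≫ cokernel.π (biprod.lift ι (-h'))) ≫ ρW = 𝟙 _ := by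
        rw [Fm_comp F hY hXY hW biprod.inr (cokernel.π _), Category.assoc, hρW,
          Preadditive.comp_add, ← Category.assoc, ← Fm_comp F hY hXY hX, biprod.inr_fst,
          Fm_zero, zero_comp, zero_add, ← Fm_comp F hY hXY hY, biprod.inr_snd, Fm_id]
      obtain ⟨nY, hnY⟩ := hLen Y hY
      obtain ⟨rW, hrW⟩ := (phase2 nY Y hY hnY (cokernel ι) hSZ hXs).2
        (cokernel (biprod.lift ι (-h'))) hW (biprod.inr ≫ cokernel.π (biprod.lift ι (-h')))
        wmap wW sesW ⟨ρW, haW⟩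
      have hrW' : biprod.inr ≫ cokernel.π (biprod.lift ι (-h')) ≫ rW = 𝟙 Y := by
        rw [← Category.assoc]; exact hrW
      have hd2 : ι ≫ biprod.inl = biprod.lift ι (-h') + h' ≫ biprod.inr := by
        rw [biprod_lift_eq, Preadditive.neg_comp]
        abel
      have hιh : ι ≫ ((biprod.inl ≫ cokernel.π (biprod.lift ι (-h'))) ≫ rW) = h' := by
        calc ι ≫ ((biprod.inl ≫ cokernel.π (biprod.lift ι (-h'))) ≫ rW)
            = ((ι ≫ biprod.inl) ≫ cokernel.π (biprod.lift ι (-h'))) ≫ rW := by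
              simp only [Category.assoc]
          _ = ((biprod.lift ι (-h') + h' ≫ biprod.inr)
                ≫ cokernel.π (biprod.lift ι (-h'))) ≫ rW := by rw [hd2]
          _ = ((h' ≫ biprod.inr) ≫ cokernel.π (biprod.lift ι (-h'))) ≫ rW := by
              rw [Preadditive.add_comp, cokernel.condition, zero_add]
          _ = h' ≫ biprod.inr ≫ cokernel.π (biprod.lift ι (-h')) ≫ rW := by
              simp only [Category.assoc]
          _ = h' ≫ 𝟙 Y := by rw [hrW']
          _ = h' := Category.comp_id h'
      have hg₂ : Fm F hX' hX ι
          ≫ (g - Fm F hX hY ((biprod.inl ≫ cokernel.π (biprod.lift ι (-h'))) ≫ rW)) = 0 := by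
        rw [Preadditive.comp_sub, ← Fm_comp F hX' hX hY, hιh, hh', sub_self]
      obtain ⟨u', hu'⟩ := desc_of_comp_zero FsesX _ hg₂
      obtain ⟨v', hv'⟩ := (phase2 nY Y hY hnY (cokernel ι) hSZ hXs).1 u'
      refine ⟨(biprod.inl ≫ cokernel.π (biprod.lift ι (-h'))) ≫ rW + cokernel.π ι ≫ v', ?_⟩
      rw [Fm_add F hX hY, Fm_comp F hX hSZ hY (cokernel.π ι) v',
        show Fm F hSZ hY v' = u' from hv', hu']
      abel
  -- Assembly
  refine ⟨?_, ?_⟩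
  · intro X Y
    constructor
    · intro f g hfg
      obtain ⟨nX, hnX⟩ := hLen X.obj X.property
      have h0 : Fm F X.property Y.property (f.hom - g.hom) = 0 := by
        rw [Fm_sub F X.property Y.property f.hom g.hom,
          show Fm F X.property Y.property f.hom = Fm F X.property Y.property g.hom from hfg,
          sub_self]
      have := phase1 nX X.obj X.property hnX Y.obj Y.property (f.hom - g.hom) h0
      exact ObjectProperty.hom_ext _ (sub_eq_zero.mp this)
    · intro g
      obtain ⟨nX, hnX⟩ := hLen X.obj X.property
      obtain ⟨f, hf⟩ := phase3 nX X.obj X.property hnX Y.obj Y.property g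
      exact ⟨ObjectProperty.homMk f, hf⟩
  · intro X Y hX hY E hE i p w hses hsplit
    obtain ⟨ρ, hρ⟩ := hsplit
    obtain ⟨nE, hnE⟩ := hLen E hE
    obtain ⟨r, hr⟩ := phase3 nE E hE hnE Y hY ρ
    obtain ⟨nY, hnY⟩ := hLen Y hY
    refine ⟨r, ?_⟩
    have h0 : Fm F hY hY (i ≫ r - 𝟙 Y) = 0 := by
      rw [Fm_sub F hY hY, Fm_comp F hY hE hY i r, hr, hρ, Fm_id, sub_self]
    have := phase1 nY Y hY hnY Y hY (i ≫ r - 𝟙 Y) h0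
    exact sub_eq_zero.mp this
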